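/- Let η = 1, α = 1, λ > 0, T > 0, and define y(t) = 1 + log(1 + λ(T−t)/e) for t ∈ [0, T]. With f(x) = e^{−x}, F(x) = 1 − e^{−x} (exponential with rate 1), y satisfies the fixed-point equation y(t) = (1 − F(y(t)))/f(y(t)) + λ·∫_t^T ((1 − F(y(s)))²)/f(y(s)) ds for all t ∈ [0, T]. -/

import Mathlib

theorem exp_cutoff_solves_fixed_point (lam T : ℝ) (hlam : 0 < lam) (hT : 0 < T)
    (f F y : ℝ → ℝ)
    (hf : ∀ x : ℝ, f x = Real.exp (-x))
    (hF : ∀ x : ℝ, F x = 1 - Real.exp (-x))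
    (hy : ∀ t : ℝ, y t = 1 + Real.log (1 + lam * (T - t) / Real.exp 1)) :
    ∀ t ∈ Set.Icc (0:ℝ) T,
      y t = (1 - F (y t)) / f (y t) +
        lam * ∫ s in t..T, (1 - F (y s)) ^ 2 / f (y s) := by
  intro t ht
  obtain ⟨ht0, htT⟩ := ht
  have he : (0:ℝ) < Real.exp 1 := Real.exp_pos 1
  -- positivity of e + lam*(T - s) on [t, T]
  have hpos : ∀ s ∈ Set.uIcc t T, 0 < Real.exp 1 + lam * (T - s) := by
    intro s hs
    rw [Set.uIcc_of_le htT] at hs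
    nlinarith [hs.2]
  -- (1 - F y)/f y = 1
  have hratio1 : (1 - F (y t)) / f (y t) = 1 := by
    rw [hf, hF]
    have := Real.exp_pos (-(y t))
    field_simp
    ring
  -- integrand equals 1/(e + lam*(T - s))
  have hint : ∀ s ∈ Set.uIcc t T,
      (1 - F (y s)) ^ 2 / f (y s) = 1 / (Real.exp 1 + lam * (T - s)) := by
    intro s hs
    have hc : 0 < 1 + lam * (T - s) / Real.exp 1 := by
      have h := hpos s hs
      rw [show (1:ℝ) + lam * (T - s) / Real.exp 1
          = (Real.exp 1 + lam * (T - s)) / Real.exp 1 by field_simp]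
      exact div_pos h he
    rw [hf, hF, hy]
    have : Real.exp (-(1 + Real.log (1 + lam * (T - s) / Real.exp 1)))
        = 1 / (Real.exp 1 + lam * (T - s)) := by
      rw [neg_add, Real.exp_add, Real.exp_neg, Real.exp_neg, Real.exp_log hc]
      field_simp
    rw [this]
    have h := ne_of_gt (hpos s hs)
    field_simp
    ring
  have hcongr : (∫ s in t..T, (1 - F (y s)) ^ 2 / f (y s))
      = ∫ s in t..T, 1 / (Real.exp 1 + lam * (T - s)) :=
    intervalIntegral.integral_congr hint
  -- compute the integral via antiderivative g(s) = -log(e + lam*(T-s))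
  have hderiv : ∀ s ∈ Set.uIcc t T,
      HasDerivAt (fun u => -Real.log (Real.exp 1 + lam * (T - u)))
        (lam * (1 / (Real.exp 1 + lam * (T - s)))) s := by
    intro s hs
    have h1 : HasDerivAt (fun u : ℝ => Real.exp 1 + lam * (T - u)) (-lam) s := by
      have : HasDerivAt (fun u : ℝ => Real.exp 1 + lam * (T - u)) (0 + lam * (0 - 1)) s := by
        exact (hasDerivAt_const s (Real.exp 1)).add
          (((hasDerivAt_const s T).sub (hasDerivAt_id s)).const_mul lam)
      simpa using this
    have h2 := (h1.log (ne_of_gt (hpos s hs))).neg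
    refine h2.congr_deriv ?_
    ring
  have hcont : IntervalIntegrable (fun s => lam * (1 / (Real.exp 1 + lam * (T - s))))
      MeasureTheory.volume t T := by
    apply ContinuousOn.intervalIntegrable
    apply ContinuousOn.mul continuousOn_const
    apply ContinuousOn.div continuousOn_const
    · exact (continuousOn_const.add (continuousOn_const.mul
        (continuousOn_const.sub continuousOn_id)))
    · exact fun s hs => ne_of_gt (hpos s hs)
  have hI : (∫ s in t..T, lam * (1 / (Real.exp 1 + lam * (T - s))))
      = -Real.log (Real.exp 1 + lam * (T - T)) - (-Real.log (Real.exp 1 + lam * (T - t))) :=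
    intervalIntegral.integral_eq_sub_of_hasDerivAt hderiv hcont
  have hmeT : (0:ℝ) ≤ lam * (T - t) := by nlinarith
  have hlogsplit : Real.log (1 + lam * (T - t) / Real.exp 1)
      = Real.log (Real.exp 1 + lam * (T - t)) - 1 := by
    have : 1 + lam * (T - t) / Real.exp 1 = (Real.exp 1 + lam * (T - t)) / Real.exp 1 := by
      field_simp
    rw [this, Real.log_div (by positivity) (ne_of_gt he), Real.log_exp]
  calc y t = 1 + Real.log (1 + lam * (T - t) / Real.exp 1) := hy t
    _ = 1 + (Real.log (Real.exp 1 + lam * (T - t)) - 1) := by rw [hlogsplit]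
    _ = 1 + (-Real.log (Real.exp 1 + lam * (T - T))
          - (-Real.log (Real.exp 1 + lam * (T - t)))) := by
        simp only [sub_self, mul_zero, add_zero, Real.log_exp]; ring
    _ = 1 + ∫ s in t..T, lam * (1 / (Real.exp 1 + lam * (T - s))) := by rw [hI]
    _ = 1 + lam * ∫ s in t..T, 1 / (Real.exp 1 + lam * (T - s)) := by
        rw [intervalIntegral.integral_const_mul]
    _ = (1 - F (y t)) / f (y t) + lam * ∫ s in t..T, (1 - F (y s)) ^ 2 / f (y s) := by
        rw [hratio1, hcongr]
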